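/- arXiv:1805.08107 — 5 statements merged into one kernel-verified Lean document; each statement's English description precedes it below -/
import Mathlib

section
/- Let n ≥ 1 and 1 ≤ k ≤ n. Let H be a symmetric positive semidefinite n×n real matrix, G a symmetric positive definite n×n real matrix, and c > 0 a real number such that G ⪯ c⁻¹·I in the Loewner order (equivalently G⁻¹ ⪰ c·I). Let G^{-1/2} denote the inverse of the positive definite square root of G. Then σ_k(λ(G^{-1/2}·H·G^{-1/2})) ≥ c^k·σ_k(λ(H)), where λ(A) denotes the n-tuple of eigenvalues (with multiplicity) of a symmetric matrix A. -/
open Finset Matrix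

/-- The `k`-th elementary symmetric polynomial of `l : Fin n → ℝ`. -/
noncomputable def esymm (n k : ℕ) (l : Fin n → ℝ) : ℝ :=
  ∑ s ∈ Finset.powersetCard k (Finset.univ : Finset (Fin n)), ∏ i ∈ s, l i

section

open scoped ComplexOrder

/-- The square root of a positive semidefinite matrix, as defined in Mathlib (Dec 2024);
removed from Mathlib since, restored here with its old definition. -/
noncomputable def Matrix.PosSemidef.sqrt {n 𝕜 : Type*} [Fintype n] [DecidableEq n] [RCLike 𝕜]
    {A : Matrix n n 𝕜} (hA : A.PosSemidef) : Matrix n n 𝕜 :=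
  (hA.isHermitian.eigenvectorUnitary : Matrix n n 𝕜) *
    diagonal ((↑) ∘ (√·) ∘ hA.isHermitian.eigenvalues) *
    (star hA.isHermitian.eigenvectorUnitary : Matrix n n 𝕜)

end

namespace Matrix.PosSemidef

lemma posSemidef_sqrt {m : Type*} [Fintype m] [DecidableEq m] {A : Matrix m m ℝ}
    (hA : A.PosSemidef) : hA.sqrt.PosSemidef := by
  unfold Matrix.PosSemidef.sqrt
  exact (PosSemidef.diagonal (fun i => by simp [Real.sqrt_nonneg])).mul_mul_conjTranspose_same _

lemma sqrt_mul_self {m : Type*} [Fintype m] [DecidableEq m] {A : Matrix m m ℝ}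
    (hA : A.PosSemidef) : hA.sqrt * hA.sqrt = A := by
  unfold Matrix.PosSemidef.sqrt
  have hU : star (hA.isHermitian.eigenvectorUnitary : Matrix m m ℝ)
      * (hA.isHermitian.eigenvectorUnitary : Matrix m m ℝ) = 1 :=
    Unitary.coe_star_mul_self _
  conv_rhs => rw [hA.isHermitian.spectral_theorem, Unitary.conjStarAlgAut_apply]
  rw [show ∀ a b c d e : Matrix m m ℝ, a * b * c * (a * d * e) = a * (b * (c * a) * d) * e by
    intros; simp only [Matrix.mul_assoc]]
  rw [hU, Matrix.mul_one, diagonal_mul_diagonal]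
  congr 3
  funext i
  simp [Real.mul_self_sqrt (hA.eigenvalues_nonneg i)]

end Matrix.PosSemidef

open Polynomial

noncomputable def pmsTerm {n : ℕ} (A : Matrix (Fin n) (Fin n) ℝ) (t : Finset (Fin n)) : ℝ :=
  (A.submatrix (fun i : {x // x ∈ t} => (i : Fin n)) (fun i : {x // x ∈ t} => (i : Fin n))).det

/-- sum of principal `k × k` minors -/
noncomputable def pms (n k : ℕ) (A : Matrix (Fin n) (Fin n) ℝ) : ℝ :=
  ∑ s ∈ Finset.powersetCard k (Finset.univ : Finset (Fin n)), pmsTerm A s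

lemma det_eq_det_compl_submatrix {R : Type*} [CommRing R] {n : ℕ} (s : Finset (Fin n))
    (B : Matrix (Fin n) (Fin n) R)
    (hB : ∀ i ∈ s, ∀ j, B i j = if i = j then 1 else 0) :
    B.det = (B.submatrix (fun i : {x // x ∈ sᶜ} => (i : Fin n))
      (fun i : {x // x ∈ sᶜ} => (i : Fin n))).det := by
  classical
  let e : {x // x ∈ s} ⊕ {x // ¬ x ∈ s} ≃ Fin n := Equiv.sumCompl (· ∈ s)
  rw [← Matrix.det_submatrix_equiv_self e B]
  have hblock : B.submatrix e e = Matrix.fromBlocks 1 0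
      (B.submatrix (fun i : {x // ¬ x ∈ s} => (i : Fin n)) (fun i : {x // x ∈ s} => (i : Fin n)))
      (B.submatrix (fun i : {x // ¬ x ∈ s} => (i : Fin n))
        (fun i : {x // ¬ x ∈ s} => (i : Fin n))) := by
    ext i j
    cases i with
    | inl i =>
      cases j with
      | inl j =>
        simp only [submatrix_apply, Matrix.fromBlocks_apply₁₁, e, Equiv.sumCompl_apply_inl]
        rw [hB i i.2]
        rw [Matrix.one_apply]
        exact if_congr Subtype.ext_iff.symm rfl rfl
      | inr j =>
        simp only [submatrix_apply, Matrix.fromBlocks_apply₁₂, e, Equiv.sumCompl_apply_inl,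
          Equiv.sumCompl_apply_inr]
        rw [hB i i.2]
        have : (i : Fin n) ≠ (j : Fin n) := by
          intro h
          exact j.2 (h ▸ i.2)
        simp [this]
    | inr i =>
      cases j with
      | inl j => rfl
      | inr j => rfl
  rw [hblock, Matrix.det_fromBlocks_zero₁₂, Matrix.det_one, one_mul]
  let e' : {x // ¬ x ∈ s} ≃ {x // x ∈ sᶜ} :=
    Equiv.subtypeEquivRight (fun x => (Finset.mem_compl (s := s)).symm)
  rw [← Matrix.det_submatrix_equiv_self e'
    (B.submatrix (fun i : {x // x ∈ sᶜ} => (i : Fin n)) (fun i : {x // x ∈ sᶜ} => (i : Fin n)))]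
  rw [Matrix.submatrix_submatrix]
  congr 1

lemma charpoly_eq_sum_pmsTerm {n : ℕ} (A : Matrix (Fin n) (Fin n) ℝ) :
    A.charpoly = ∑ t : Finset (Fin n),
      C ((-1 : ℝ) ^ t.card * pmsTerm A t) * X ^ (n - t.card) := by
  classical
  set a : Fin n → Fin n → ℝ[X] := fun i => Pi.single i (X : ℝ[X]) with ha
  set b : Fin n → Fin n → ℝ[X] := fun i j => -C (A i j) with hb
  have hchar : A.charmatrix = Matrix.of (a + b) := by
    ext i j
    by_cases h : i = j
    · subst h
      simp [a, b, charmatrix_apply_eq, Pi.single_apply, sub_eq_add_neg]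
    · simp [a, b, charmatrix_apply_ne _ _ _ h, Pi.single_apply, Ne.symm h]
  have hdet : A.charpoly = (Matrix.detRowAlternating (R := ℝ[X]) (n := Fin n)) (a + b) := by
    rw [Matrix.charpoly, hchar]; rfl
  have hsplit : (Matrix.detRowAlternating (R := ℝ[X]) (n := Fin n)) (a + b)
      = ∑ s : Finset (Fin n),
        (Matrix.detRowAlternating (R := ℝ[X]) (n := Fin n)) (s.piecewise a b) :=
    (Matrix.detRowAlternating (R := ℝ[X]) (n := Fin n)).toMultilinearMap.map_add_univ a b
  rw [hdet, hsplit]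
  have hterm : ∀ s : Finset (Fin n),
      (Matrix.detRowAlternating (R := ℝ[X]) (n := Fin n)) (s.piecewise a b)
        = X ^ s.card * (-1 : ℝ[X]) ^ (n - s.card) * C (pmsTerm A sᶜ) := by
    intro s
    set c : Fin n → ℝ[X] := fun i => if i ∈ s then (X : ℝ[X]) else -1 with hcdef
    set N : Matrix (Fin n) (Fin n) ℝ[X] :=
      Matrix.of (fun i j => if i ∈ s then (if i = j then 1 else 0) else C (A i j)) with hNdef
    have hpw : s.piecewise a b = fun i => c i • N i := by
      funext i j
      by_cases hi : i ∈ s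
      · simp only [s.piecewise_eq_of_mem _ _ hi, c, N, hi, if_true]
        by_cases h : i = j
        · subst h; simp [a, Pi.single_apply, hi]
        · simp [a, Pi.single_apply, h, Ne.symm h, hi]
      · simp [s.piecewise_eq_of_notMem _ _ hi, c, N, hi, b]
    have hsm : (Matrix.detRowAlternating (R := ℝ[X]) (n := Fin n)) (fun i => c i • N i)
        = (∏ i, c i) • (Matrix.detRowAlternating (R := ℝ[X]) (n := Fin n)) N :=
      (Matrix.detRowAlternating (R := ℝ[X]) (n := Fin n)).toMultilinearMap.map_smul_univ c N
    rw [hpw, hsm]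
    have hc : ∏ i, c i = X ^ s.card * (-1 : ℝ[X]) ^ (n - s.card) := by
      rw [hcdef, Finset.prod_ite _ _]
      have h1 : Finset.filter (fun i => i ∈ s) Finset.univ = s := by
        ext x; simp
      have h2 : Finset.filter (fun i => ¬ i ∈ s) Finset.univ = sᶜ := by
        ext x; simp
      rw [h1, h2, Finset.prod_const, Finset.prod_const, Finset.card_compl]
      simp
    have hdetN : (Matrix.detRowAlternating (R := ℝ[X]) (n := Fin n)) N = C (pmsTerm A sᶜ) := by
      have h1 : N.det = (N.submatrix (fun i : {x // x ∈ sᶜ} => (i : Fin n))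
          (fun i : {x // x ∈ sᶜ} => (i : Fin n))).det := by
        apply det_eq_det_compl_submatrix
        intro i hi j
        simp [N, hi]
      have h2 : N.submatrix (fun i : {x // x ∈ sᶜ} => (i : Fin n))
          (fun i : {x // x ∈ sᶜ} => (i : Fin n))
          = ((A.submatrix (fun i : {x // x ∈ sᶜ} => (i : Fin n))
            (fun i : {x // x ∈ sᶜ} => (i : Fin n))).map C) := by
        ext i j
        have : ¬ (i : Fin n) ∈ s := Finset.mem_compl.mp i.2
        simp [N, this]
      show N.det = C (pmsTerm A sᶜ)
      rw [h1, h2, pmsTerm, ← RingHom.mapMatrix_apply, ← RingHom.map_det]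
    rw [hc, hdetN, smul_eq_mul]
  rw [Finset.sum_congr rfl (fun s _ => hterm s)]
  refine Fintype.sum_bijective (fun t : Finset (Fin n) => tᶜ) (compl_involutive.bijective) _ _ (fun t => ?_)
  have htc : t.card ≤ n := by
    simpa using Finset.card_le_univ t
  rw [Finset.card_compl, Fintype.card_fin, Nat.sub_sub_self htc, _root_.map_mul, map_pow, map_neg,
    Polynomial.C_1]
  ring

lemma charpoly_coeff_eq_pms {n k : ℕ} (hk : k ≤ n) (A : Matrix (Fin n) (Fin n) ℝ) :
    A.charpoly.coeff (n - k) = (-1 : ℝ) ^ k * pms n k A := by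
  classical
  rw [charpoly_eq_sum_pmsTerm, Polynomial.finset_sum_coeff]
  have hco : ∀ t : Finset (Fin n),
      (C ((-1 : ℝ) ^ t.card * pmsTerm A t) * X ^ (n - t.card)).coeff (n - k)
        = if t.card = k then (-1 : ℝ) ^ k * pmsTerm A t else 0 := by
    intro t
    have htc : t.card ≤ n := by simpa using Finset.card_le_univ t
    rw [Polynomial.coeff_C_mul_X_pow]
    by_cases h : t.card = k
    · have : n - k = n - t.card := by omega
      simp [h, this]
    · have : ¬ (n - k = n - t.card) := by omega
      simp [h, this]
  rw [Finset.sum_congr rfl (fun t _ => hco t)]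
  rw [Finset.sum_ite, Finset.sum_const_zero, add_zero]
  rw [← Finset.mul_sum]
  congr 1
  apply Finset.sum_congr _ (fun _ _ => rfl)
  rw [← Finset.powerset_univ, Finset.powersetCard_eq_filter]

lemma charpoly_conj {n : ℕ} {R : Type*} [CommRing R] (P B : Matrix (Fin n) (Fin n) R)
    (h : IsUnit P.det) : (P * B * P⁻¹).charpoly = B.charpoly := by
  have hPP : P * P⁻¹ = 1 := mul_nonsing_inv P h
  have key : (P.map C) * ((P⁻¹).map C) = 1 := by
    rw [← Matrix.map_mul, hPP, Matrix.map_one _ C.map_zero C.map_one]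
  have hscalar : (Matrix.scalar (Fin n)) (X : R[X])
      = (X : R[X]) • (1 : Matrix (Fin n) (Fin n) R[X]) := by
    ext i j
    by_cases h : i = j <;>
      simp [Matrix.scalar_apply, Matrix.diagonal_apply, h, Matrix.one_apply]
  have hcm : charmatrix (P * B * P⁻¹) = (P.map C) * charmatrix B * ((P⁻¹).map C) := by
    rw [charmatrix, charmatrix, RingHom.mapMatrix_apply, RingHom.mapMatrix_apply, hscalar]
    rw [Matrix.mul_sub, Matrix.sub_mul, mul_smul_comm, smul_mul_assoc, mul_one, key]
    rw [Matrix.map_mul, Matrix.map_mul]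
  rw [Matrix.charpoly, Matrix.charpoly, hcm, det_mul, det_mul]
  rw [mul_comm ((P.map C).det) _, mul_assoc, ← det_mul, key, det_one, mul_one]

lemma charpoly_diagonal {n : ℕ} (d : Fin n → ℝ) :
    (Matrix.diagonal d).charpoly = ∏ i, ((X : ℝ[X]) - C (d i)) := by
  have h : charmatrix (Matrix.diagonal d) = Matrix.diagonal (fun i => (X : ℝ[X]) - C (d i)) := by
    ext i j
    by_cases h : i = j
    · subst h; simp [charmatrix_apply_eq]
    · simp [charmatrix_apply_ne _ _ _ h, Matrix.diagonal_apply_ne _ h]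
  rw [Matrix.charpoly, h, Matrix.det_diagonal]

lemma prod_X_sub_C_coeff_esymm {n k : ℕ} (hk : k ≤ n) (d : Fin n → ℝ) :
    (∏ i, ((X : ℝ[X]) - C (d i))).coeff (n - k) = (-1 : ℝ) ^ k * esymm n k d := by
  classical
  have hcard : Multiset.card ((Finset.univ.val : Multiset (Fin n)).map d) = n := by
    simp
  have h1 : (∏ i : Fin n, ((X : ℝ[X]) - C (d i)))
      = (((Finset.univ.val : Multiset (Fin n)).map d).map (fun t => X - C t)).prod := by
    rw [Multiset.map_map]
    rfl
  rw [h1, Multiset.prod_X_sub_C_coeff _ (by rw [hcard]; omega)]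
  rw [hcard, Nat.sub_sub_self hk, Finset.esymm_map_val]
  rfl

lemma pms_eq_of_charpoly_eq {n k : ℕ} (hk : k ≤ n) {A B : Matrix (Fin n) (Fin n) ℝ}
    (h : A.charpoly = B.charpoly) : pms n k A = pms n k B := by
  have h1 := charpoly_coeff_eq_pms hk A
  have h2 := charpoly_coeff_eq_pms hk B
  rw [h, h2] at h1
  exact (mul_left_cancel₀ (pow_ne_zero k (by norm_num : (-1 : ℝ) ≠ 0)) h1.symm)

lemma pms_eq_esymm {n k : ℕ} (hk : k ≤ n) {A : Matrix (Fin n) (Fin n) ℝ}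
    (hA : A.IsHermitian) : pms n k A = esymm n k hA.eigenvalues := by
  set V : Matrix (Fin n) (Fin n) ℝ := (hA.eigenvectorUnitary : Matrix (Fin n) (Fin n) ℝ) with hV
  have hVV : V * star V = 1 := (Matrix.mem_unitaryGroup_iff).mp (hA.eigenvectorUnitary).2
  have hVdet : IsUnit V.det := by
    apply IsUnit.of_mul_eq_one ((star V).det)
    rw [← det_mul, hVV, det_one]
  have hVinv : V⁻¹ = star V := Matrix.inv_eq_right_inv hVV
  have hd : (RCLike.ofReal ∘ hA.eigenvalues : Fin n → ℝ) = hA.eigenvalues := by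
    funext i; simp
  have hcp : A.charpoly = (Matrix.diagonal hA.eigenvalues).charpoly := by
    conv_lhs => rw [hA.spectral_theorem]
    rw [hd, Unitary.conjStarAlgAut_apply, ← hV, ← hVinv, charpoly_conj _ _ hVdet]
  have h1 := charpoly_coeff_eq_pms hk A
  rw [hcp, _root_.charpoly_diagonal, prod_X_sub_C_coeff_esymm hk] at h1
  exact (mul_left_cancel₀ (pow_ne_zero k (by norm_num : (-1 : ℝ) ≠ 0)) h1).symm

lemma psd_det_nonneg {m : Type*} [Fintype m] [DecidableEq m] {A : Matrix m m ℝ} (hA : A.PosSemidef) :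
    0 ≤ A.det := by
  rw [hA.isHermitian.det_eq_prod_eigenvalues]
  exact Finset.prod_nonneg fun i _ => by simpa using hA.eigenvalues_nonneg i

lemma eigenvalues_ge_one {m : Type*} [Fintype m] [DecidableEq m] {C : Matrix m m ℝ} (hC : C.IsHermitian)
    (h1 : (C - 1).PosSemidef) (i : m) : 1 ≤ hC.eigenvalues i := by
  have hv := hC.mulVec_eigenvectorBasis i
  set v : m → ℝ := ⇑(hC.eigenvectorBasis i) with hvdef
  have hv0 : v ≠ 0 := by
    intro h
    exact hC.eigenvectorBasis.orthonormal.ne_zero i (by ext j; exact congrFun h j)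
  have hdp : 0 < v ⬝ᵥ v := by
    rcases Function.ne_iff.mp hv0 with ⟨j, hj⟩
    have : 0 < v j * v j := mul_self_pos.mpr hj
    apply lt_of_lt_of_le this
    rw [dotProduct]
    apply Finset.single_le_sum (f := fun j => v j * v j) (fun i _ => mul_self_nonneg _)
      (Finset.mem_univ j)
  have hq := h1.dotProduct_mulVec_nonneg v
  rw [Matrix.sub_mulVec, Matrix.one_mulVec, dotProduct_sub, hv] at hq
  rw [star_trivial, dotProduct_smul, smul_eq_mul] at hq
  nlinarith
set_option maxHeartbeats 1000000 in
lemma psd_det_mono {m : Type*} [Fintype m] [DecidableEq m] {A B : Matrix m m ℝ} (hA : A.PosSemidef)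
    (hB : B.PosSemidef) (hAB : (A - B).PosSemidef) : B.det ≤ A.det := by
  rcases eq_or_ne B.det 0 with h0 | h0
  · rw [h0]; exact psd_det_nonneg hA
  · obtain ⟨R, hR, hRR⟩ : ∃ R : Matrix m m ℝ, R.PosSemidef ∧ R * R = B :=
      ⟨hB.sqrt, hB.posSemidef_sqrt, hB.sqrt_mul_self⟩
    have hdetR : R.det * R.det = B.det := by rw [← det_mul, hRR]
    have hRdet : IsUnit R.det := by
      have : R.det ≠ 0 := fun h => h0 (by rw [← hdetR, h, mul_zero])
      exact this.isUnit
    have hRinv : R⁻¹ * R = 1 := nonsing_inv_mul R hRdet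
    have hRinv' : R * R⁻¹ = 1 := mul_nonsing_inv R hRdet
    have hRih : (R⁻¹)ᴴ = R⁻¹ := by
      rw [conjTranspose_nonsing_inv, hR.isHermitian.eq]
    obtain ⟨C, hCdef⟩ : ∃ C, C = R⁻¹ * A * R⁻¹ := ⟨_, rfl⟩
    have hC : C.PosSemidef := by
      rw [hCdef]
      have := hA.mul_mul_conjTranspose_same R⁻¹
      rwa [hRih] at this
    have hC1 : (C - 1).PosSemidef := by
      have h2 : R⁻¹ * B * R⁻¹ = 1 := by
        rw [← hRR, ← Matrix.mul_assoc R⁻¹ R R, hRinv, one_mul, hRinv']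
      have h3 : C - 1 = R⁻¹ * (A - B) * R⁻¹ := by
        rw [hCdef, ← h2, Matrix.mul_sub, Matrix.sub_mul]
      rw [h3]
      have := hAB.mul_mul_conjTranspose_same R⁻¹
      rwa [hRih] at this
    have hdetC : 1 ≤ C.det := by
      have h := Finset.prod_le_prod (s := (Finset.univ : Finset m))
        (f := fun _ => (1:ℝ)) (g := fun i => (hC.isHermitian.eigenvalues i : ℝ))
        (by intros; norm_num)
        (fun i _ => by simpa using eigenvalues_ge_one hC.isHermitian hC1 i)
      rw [hC.isHermitian.det_eq_prod_eigenvalues]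
      simpa using h
    have hACR : A = R * C * R := by
      rw [hCdef, ← mul_assoc, ← mul_assoc, hRinv', one_mul, mul_assoc, hRinv, mul_one]
    have hdetA : A.det = B.det * C.det := by
      rw [hACR, det_mul, det_mul, ← hdetR]; ring
    have hBpos : 0 < B.det := lt_of_le_of_ne (psd_det_nonneg hB) (Ne.symm h0)
    rw [hdetA]
    nlinarith

lemma psd_smul {n : ℕ} {A : Matrix (Fin n) (Fin n) ℝ} (hA : A.PosSemidef) {c : ℝ}
    (hc : 0 ≤ c) : (c • A).PosSemidef := by
  refine Matrix.PosSemidef.of_dotProduct_mulVec_nonneg ?_ ?_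
  · show (c • A)ᴴ = c • A
    rw [conjTranspose_smul, star_trivial, hA.isHermitian.eq]
  · intro x
    rw [Matrix.smul_mulVec, dotProduct_smul, smul_eq_mul]
    exact mul_nonneg hc (hA.dotProduct_mulVec_nonneg x)

lemma pms_smul {n k : ℕ} (A : Matrix (Fin n) (Fin n) ℝ) (c : ℝ) :
    pms n k (c • A) = c ^ k * pms n k A := by
  unfold pms pmsTerm
  rw [Finset.mul_sum]
  apply Finset.sum_congr rfl
  intro s hs
  have hcard : Fintype.card {x // x ∈ s} = k := by
    rw [Fintype.card_coe]
    exact (Finset.mem_powersetCard.mp hs).2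
  have hsub : (c • A).submatrix (fun i : {x // x ∈ s} => (i : Fin n))
      (fun i : {x // x ∈ s} => (i : Fin n))
      = c • (A.submatrix (fun i : {x // x ∈ s} => (i : Fin n))
        (fun i : {x // x ∈ s} => (i : Fin n))) := by
    ext i j; simp
  rw [hsub, Matrix.det_smul, hcard]

lemma pms_continuous {n k : ℕ} {X : Type*} [TopologicalSpace X]
    {A : X → Matrix (Fin n) (Fin n) ℝ} (hA : Continuous A) :
    Continuous (fun x => pms n k (A x)) := by
  unfold pms pmsTerm
  apply continuous_finset_sum
  intro s _
  exact (hA.matrix_submatrix _ _).matrix_det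

lemma pms_mono {n k : ℕ} {A B : Matrix (Fin n) (Fin n) ℝ} (hA : A.PosSemidef)
    (hB : B.PosSemidef) (hAB : (A - B).PosSemidef) : pms n k B ≤ pms n k A := by
  unfold pms pmsTerm
  apply Finset.sum_le_sum
  intro s _
  apply psd_det_mono (hA.submatrix _) (hB.submatrix _)
  have := hAB.submatrix (fun i : {x // x ∈ s} => (i : Fin n))
  have hsub : (A - B).submatrix (fun i : {x // x ∈ s} => (i : Fin n))
      (fun i : {x // x ∈ s} => (i : Fin n))
      = A.submatrix (fun i : {x // x ∈ s} => (i : Fin n)) (fun i : {x // x ∈ s} => (i : Fin n))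
      - B.submatrix (fun i : {x // x ∈ s} => (i : Fin n))
          (fun i : {x // x ∈ s} => (i : Fin n)) := by
    ext i j; simp
  rwa [hsub] at this

/-- If `H ⪰ 0`, `G > 0` with `G ⪯ c⁻¹ I`, then
`σ_k(λ(G^{-1/2} H G^{-1/2})) ≥ c^k σ_k(λ(H))`. -/
theorem stmt_4 (n : ℕ) (hn : 1 ≤ n) (k : ℕ) (hk1 : 1 ≤ k) (hkn : k ≤ n)
    (H G : Matrix (Fin n) (Fin n) ℝ) (hH : H.PosSemidef) (hG : G.PosDef)
    (c : ℝ) (hc : 0 < c)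
    (hGc : (c⁻¹ • (1 : Matrix (Fin n) (Fin n) ℝ) - G).PosSemidef)
    (M : Matrix (Fin n) (Fin n) ℝ)
    (hM : M = hG.posSemidef.sqrt⁻¹ * H * hG.posSemidef.sqrt⁻¹)
    (hMh : M.IsHermitian) :
    c ^ k * esymm n k hH.isHermitian.eigenvalues ≤ esymm n k hMh.eigenvalues := by
  classical
  obtain ⟨S, hS, hSS, hM⟩ : ∃ S : Matrix (Fin n) (Fin n) ℝ,
      S.PosSemidef ∧ S * S = G ∧ M = S⁻¹ * H * S⁻¹ :=
    ⟨hG.posSemidef.sqrt, hG.posSemidef.posSemidef_sqrt, hG.posSemidef.sqrt_mul_self, hM⟩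
  have hGdet : 0 < G.det := hG.det_pos
  have hdetS : S.det * S.det = G.det := by rw [← det_mul, hSS]
  have hSdet : IsUnit S.det := by
    have : S.det ≠ 0 := by
      intro h; rw [h, mul_zero] at hdetS; exact hGdet.ne' hdetS.symm
    exact this.isUnit
  have hSinv : S⁻¹ * S = 1 := nonsing_inv_mul S hSdet
  have hSinv' : S * S⁻¹ = 1 := mul_nonsing_inv S hSdet
  have hSih : (S⁻¹)ᴴ = S⁻¹ := by rw [conjTranspose_nonsing_inv, hS.isHermitian.eq]
  have hGinv : G⁻¹ = S⁻¹ * S⁻¹ := by rw [← hSS, Matrix.mul_inv_rev]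
  have hK1 : S⁻¹ * G * S⁻¹ = 1 := by
    rw [← hSS, ← Matrix.mul_assoc S⁻¹ S S, hSinv, one_mul, hSinv']
  have hGc' : (G⁻¹ - c • 1).PosSemidef := by
    have h1 := hGc.mul_mul_conjTranspose_same S⁻¹
    rw [hSih] at h1
    have h2 := psd_smul h1 hc.le
    have h3 : c • (S⁻¹ * (c⁻¹ • (1 : Matrix (Fin n) (Fin n) ℝ) - G) * S⁻¹)
        = G⁻¹ - c • 1 := by
      rw [Matrix.mul_sub, Matrix.sub_mul, Matrix.mul_smul, mul_one, Matrix.smul_mul,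
        hK1, smul_sub, smul_smul, mul_inv_cancel₀ hc.ne', one_smul, hGinv]
    rwa [h3] at h2
  set f : ℝ → ℝ := fun ε => pms n k (M + ε • G⁻¹) with hf
  set g : ℝ → ℝ := fun ε => pms n k (c • H + (c * ε) • 1) with hg
  have hfc : Continuous f :=
    pms_continuous (continuous_const.add ((continuous_id (X := ℝ)).smul continuous_const))
  have hgc : Continuous g :=
    pms_continuous (continuous_const.add
      ((continuous_const.mul (continuous_id (X := ℝ))).smul continuous_const))
  have key : ∀ ε ∈ Set.Ioi (0 : ℝ), g ε ≤ f ε := by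
    intro ε hε
    have hεpos : (0 : ℝ) < ε := hε
    have hI : ((ε : ℝ) • (1 : Matrix (Fin n) (Fin n) ℝ)).PosDef := by
      have hd : (ε • (1 : Matrix (Fin n) (Fin n) ℝ)) = Matrix.diagonal (fun _ => ε) := by
        ext i j; by_cases h : i = j <;> simp [Matrix.one_apply, h]
      rw [hd]
      exact Matrix.posDef_diagonal_iff.mpr (fun _ => hεpos)
    obtain ⟨K, hKdef⟩ : ∃ K, K = H + ε • (1 : Matrix (Fin n) (Fin n) ℝ) := ⟨_, rfl⟩
    have hK : K.PosDef := by rw [hKdef]; exact Matrix.PosDef.posSemidef_add hH hI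
    obtain ⟨T, hT, hTT⟩ : ∃ T : Matrix (Fin n) (Fin n) ℝ, T.PosSemidef ∧ T * T = K :=
      ⟨hK.posSemidef.sqrt, hK.posSemidef.posSemidef_sqrt, hK.posSemidef.sqrt_mul_self⟩
    have hdetT : T.det * T.det = K.det := by rw [← det_mul, hTT]
    have hTdet : IsUnit T.det := by
      have : T.det ≠ 0 := by
        intro h; rw [h, mul_zero] at hdetT; exact hK.det_pos.ne' hdetT.symm
      exact this.isUnit
    have hTinv : T⁻¹ * T = 1 := nonsing_inv_mul T hTdet
    have hTinv' : T * T⁻¹ = 1 := mul_nonsing_inv T hTdet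
    have hSiu : IsUnit (S⁻¹).det := (Matrix.isUnit_nonsing_inv_det S hSdet)
    have hPdet : IsUnit (T * S⁻¹).det := by rw [det_mul]; exact hTdet.mul hSiu
    have hSii : S⁻¹⁻¹ = S := Matrix.nonsing_inv_nonsing_inv S hSdet
    have hconj : (T * S⁻¹) * (S⁻¹ * K * S⁻¹) * (T * S⁻¹)⁻¹ = T * G⁻¹ * T := by
      rw [Matrix.mul_inv_rev, hSii, ← hTT, hGinv]
      simp only [Matrix.mul_assoc]
      rw [← Matrix.mul_assoc S⁻¹ S T⁻¹, hSinv, one_mul, hTinv', mul_one]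
    have hcpeq : (T * G⁻¹ * T).charpoly = (S⁻¹ * K * S⁻¹).charpoly := by
      rw [← hconj, charpoly_conj _ _ hPdet]
    have hMe : M + ε • G⁻¹ = S⁻¹ * K * S⁻¹ := by
      rw [hKdef, Matrix.mul_add, Matrix.add_mul, hM, Matrix.mul_smul, mul_one,
        Matrix.smul_mul, hGinv]
    have hB : (T * G⁻¹ * T).PosSemidef := by
      have h1 := (hG.inv.posSemidef).mul_mul_conjTranspose_same T
      rwa [hT.isHermitian.eq] at h1
    have hcK : (c • K).PosSemidef := psd_smul hK.posSemidef hc.le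
    have hdiff : (T * G⁻¹ * T - c • K).PosSemidef := by
      have h1 := hGc'.mul_mul_conjTranspose_same T
      rw [hT.isHermitian.eq] at h1
      have h2 : T * (G⁻¹ - c • 1) * T = T * G⁻¹ * T - c • K := by
        rw [Matrix.mul_sub, Matrix.sub_mul, Matrix.mul_smul, mul_one, Matrix.smul_mul, hTT]
      rwa [h2] at h1
    have hge : g ε = pms n k (c • K) := by
      have hcK' : c • K = c • H + (c * ε) • 1 := by
        rw [hKdef, smul_add, smul_smul]
      show pms n k (c • H + (c * ε) • 1) = pms n k (c • K)
      rw [hcK']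
    have hfe : f ε = pms n k (S⁻¹ * K * S⁻¹) := by
      show pms n k (M + ε • G⁻¹) = pms n k (S⁻¹ * K * S⁻¹)
      rw [hMe]
    rw [hge, hfe]
    calc pms n k (c • K) ≤ pms n k (T * G⁻¹ * T) := pms_mono hB hcK hdiff
      _ = pms n k (S⁻¹ * K * S⁻¹) := pms_eq_of_charpoly_eq hkn hcpeq
  have hlim : g 0 ≤ f 0 := by
    have hg' : Filter.Tendsto g (nhdsWithin 0 (Set.Ioi (0 : ℝ))) (nhds (g 0)) :=
      hgc.continuousAt.mono_left nhdsWithin_le_nhds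
    have hf' : Filter.Tendsto f (nhdsWithin 0 (Set.Ioi (0 : ℝ))) (nhds (f 0)) :=
      hfc.continuousAt.mono_left nhdsWithin_le_nhds
    exact le_of_tendsto_of_tendsto hg' hf' (eventually_nhdsWithin_of_forall key)
  have h0f : f 0 = pms n k M := by
    show pms n k (M + (0 : ℝ) • G⁻¹) = pms n k M
    rw [zero_smul, add_zero]
  have h0g : g 0 = pms n k (c • H) := by
    show pms n k (c • H + (c * 0) • 1) = pms n k (c • H)
    rw [mul_zero, zero_smul, add_zero]
  calc c ^ k * esymm n k hH.isHermitian.eigenvalues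
      = c ^ k * pms n k H := by rw [pms_eq_esymm hkn hH.isHermitian]
    _ = pms n k (c • H) := (pms_smul H c).symm
    _ = g 0 := h0g.symm
    _ ≤ f 0 := hlim
    _ = pms n k M := h0f
    _ = esymm n k hMh.eigenvalues := pms_eq_esymm hkn hMh
end

section
/- Let 0 ≤ l < π/2 and let u : [0, l] → ℝ be twice differentiable with u''(s) + u(s) > 0 for all s ∈ [0, l] and u'(0) = 0. Then the function s ↦ u(s)/cos(s) is nondecreasing on [0, l]; in particular u(0) ≤ u(l)/cos(l). -/
/-- If `0 ≤ l < π/2`, `u'' + u > 0` on `[0, l]` and `u'(0) = 0`,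
then `s ↦ u(s)/cos s` is nondecreasing on `[0, l]`; in particular
`u(0) ≤ u(l)/cos l`. -/
theorem stmt_6 (l : ℝ) (hl0 : 0 ≤ l) (hl : l < Real.pi / 2)
    (u u' u'' : ℝ → ℝ)
    (hu : ∀ s ∈ Set.Icc 0 l, HasDerivAt u (u' s) s)
    (hu' : ∀ s ∈ Set.Icc 0 l, HasDerivAt u' (u'' s) s)
    (hpos : ∀ s ∈ Set.Icc 0 l, 0 < u'' s + u s)
    (h0 : u' 0 = 0) :
    MonotoneOn (fun s => u s / Real.cos s) (Set.Icc 0 l)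
      ∧ u 0 ≤ u l / Real.cos l := by
  have hcos : ∀ s ∈ Set.Icc 0 l, 0 < Real.cos s := by
    intro s hs
    apply Real.cos_pos_of_mem_Ioo
    constructor
    · linarith [hs.1, Real.pi_pos]
    · linarith [hs.2]
  set g : ℝ → ℝ := fun s => u' s * Real.cos s + u s * Real.sin s with hg
  have hgd : ∀ s ∈ Set.Icc 0 l, HasDerivAt g ((u'' s + u s) * Real.cos s) s := by
    intro s hs
    have h1 := ((hu' s hs).mul (Real.hasDerivAt_cos s)).add
      ((hu s hs).mul (Real.hasDerivAt_sin s))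
    exact h1.congr_deriv (by ring)
  have hgc : ContinuousOn g (Set.Icc 0 l) := fun s hs =>
    (hgd s hs).continuousAt.continuousWithinAt
  have hgmono : MonotoneOn g (Set.Icc 0 l) := by
    apply StrictMonoOn.monotoneOn
    apply strictMonoOn_of_deriv_pos (convex_Icc 0 l) hgc
    intro x hx
    rw [interior_Icc] at hx
    have hx' : x ∈ Set.Icc 0 l := ⟨le_of_lt hx.1, le_of_lt hx.2⟩
    rw [(hgd x hx').deriv]
    exact mul_pos (hpos x hx') (hcos x hx')
  have hg0 : g 0 = 0 := by simp [hg, h0]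
  have hgnn : ∀ s ∈ Set.Icc 0 l, 0 ≤ g s := by
    intro s hs
    have := hgmono (Set.left_mem_Icc.2 hl0) hs hs.1
    rwa [hg0] at this
  have hfd : ∀ s ∈ Set.Icc 0 l,
      HasDerivAt (fun s => u s / Real.cos s) (g s / Real.cos s ^ 2) s := by
    intro s hs
    have h1 := (hu s hs).div (Real.hasDerivAt_cos s) (ne_of_gt (hcos s hs))
    exact h1.congr_deriv (by simp only [hg]; ring)
  have hmono : MonotoneOn (fun s => u s / Real.cos s) (Set.Icc 0 l) := by
    apply monotoneOn_of_deriv_nonneg (convex_Icc 0 l)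
    · exact fun s hs => (hfd s hs).continuousAt.continuousWithinAt
    · intro x hx
      rw [interior_Icc] at hx
      exact ((hfd x ⟨le_of_lt hx.1, le_of_lt hx.2⟩).differentiableAt).differentiableWithinAt
    · intro x hx
      rw [interior_Icc] at hx
      have hx' : x ∈ Set.Icc 0 l := ⟨le_of_lt hx.1, le_of_lt hx.2⟩
      rw [(hfd x hx').deriv]
      exact div_nonneg (hgnn x hx') (sq_nonneg _)
  refine ⟨hmono, ?_⟩
  have := hmono (Set.left_mem_Icc.2 hl0) (Set.right_mem_Icc.2 hl0) hl0
  simpa using this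
end

section
/- Let n ≥ 2 and 2 ≤ k ≤ n. For λ' = (λ₁,…,λ_{n−1}) ∈ ℝ^{n−1} the following are equivalent: (i) σ_j(λ') > 0 for all j = 1,…,k−1; (ii) there exists λ_n ∈ ℝ such that σ_j(λ₁,…,λ_{n−1},λ_n) > 0 for all j = 1,…,k. In other words, the projection of the Gårding cone Γ_k ⊂ ℝⁿ onto ℝ^{n−1} (forgetting the last coordinate) is exactly the cone Γ'_{k−1} = {λ' ∈ ℝ^{n−1} : σ_j(λ') > 0, j = 1,…,k−1}. -/
open Polynomial

lemma esymm_zero_eq_one (n : ℕ) (f : Fin n → ℝ) : esymm n 0 f = 1 := by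
  simp [esymm]

lemma esymm_of_gt {n j : ℕ} (hj : n < j) (f : Fin n → ℝ) : esymm n j f = 0 := by
  rw [esymm, Finset.powersetCard_eq_empty.2 (by simpa using hj), Finset.sum_empty]

lemma esymm_eq_coeff {n j : ℕ} (hj : j ≤ n) (f : Fin n → ℝ) :
    (∏ i : Fin n, (X + C (f i))).coeff (n - j) = esymm n j f := by
  rw [Finset.prod_X_add_C_coeff _ f (by simpa using Nat.sub_le n j), esymm]
  congr 1
  simp [Nat.sub_sub_self hj]

/-- The product as a multiset product of `X - C a`. -/
lemma prod_eq_multiset (n : ℕ) (f : Fin n → ℝ) :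
    (∏ i : Fin n, (X + C (f i))) =
      ((Finset.univ.val.map fun i : Fin n => -(f i)).map fun a => X - C a).prod := by
  rw [Multiset.map_map, Finset.prod]
  congr 1
  apply Multiset.map_congr rfl
  intro i _
  simp [sub_neg_eq_add]

lemma roots_card_prod (n : ℕ) (f : Fin n → ℝ) :
    Multiset.card (∏ i : Fin n, (X + C (f i))).roots = n := by
  rw [prod_eq_multiset, Polynomial.roots_multiset_prod_X_sub_C]
  simp

lemma natDegree_prod' (n : ℕ) (f : Fin n → ℝ) :
    (∏ i : Fin n, (X + C (f i))).natDegree = n := by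
  rw [prod_eq_multiset, Polynomial.natDegree_multiset_prod_X_sub_C_eq_card]
  simp

lemma monic_prod' (n : ℕ) (f : Fin n → ℝ) :
    (∏ i : Fin n, (X + C (f i))).Monic :=
  Polynomial.monic_prod_of_monic _ _ fun i _ => Polynomial.monic_X_add_C (f i)

/-- Iterated derivative loses at most one real root each time. -/
lemma card_roots_iterate (p : ℝ[X]) (s : ℕ) :
    Multiset.card p.roots - s ≤ Multiset.card ((Polynomial.derivative^[s]) p).roots := by
  induction s with
  | zero => simp
  | succ s ih =>
    have h := Polynomial.card_roots_le_derivative ((Polynomial.derivative^[s]) p)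
    rw [Function.iterate_succ_apply' Polynomial.derivative s p]
    omega

/-- Positivity of a product of linear factors, and of its derivative, to the right of
all roots. -/
lemma aux_prod_pos (r : ℝ) (M : Multiset ℝ) (hM : ∀ a ∈ M, a < r) :
    0 < ((M.map fun a => X - C a).prod).eval r ∧
      (M ≠ 0 → 0 < ((Polynomial.derivative (M.map fun a => X - C a).prod)).eval r) := by
  induction M using Multiset.induction_on with
  | empty => simp
  | cons a M ih =>
    have ha : a < r := hM a (Multiset.mem_cons_self a M)
    obtain ⟨h1, h2⟩ := ih fun b hb => hM b (Multiset.mem_cons_of_mem hb)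
    rw [Multiset.map_cons, Multiset.prod_cons]
    have hd : 0 ≤ ((Polynomial.derivative (M.map fun a => X - C a).prod)).eval r := by
      rcases eq_or_ne M 0 with h | h
      · simp [h]
      · exact (h2 h).le
    constructor
    · rw [eval_mul]
      simp only [eval_sub, eval_X, eval_C]
      exact mul_pos (sub_pos.2 ha) h1
    · intro _
      rw [derivative_mul]
      simp only [derivative_sub, derivative_X, derivative_C, sub_zero, one_mul, eval_add,
        eval_mul, eval_sub, eval_X, eval_C]
      nlinarith

/-- Leibniz rule for a linear factor. -/
lemma leib (x : ℝ) (p : ℝ[X]) (s : ℕ) :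
    (Polynomial.derivative^[s + 1]) ((X + C x) * p) =
      (X + C x) * (Polynomial.derivative^[s + 1]) p + C ((s : ℝ) + 1) * (Polynomial.derivative^[s]) p := by
  induction s with
  | zero =>
    simp only [Function.iterate_one, Function.iterate_zero_apply, derivative_mul,
      derivative_add, derivative_X, derivative_C, add_zero, one_mul, Nat.cast_zero,
      zero_add, map_one]
    ring
  | succ s ih =>
    have e1 : (Polynomial.derivative^[s + 1 + 1]) ((X + C x) * p)
        = Polynomial.derivative ((Polynomial.derivative^[s + 1]) ((X + C x) * p)) :=
      Function.iterate_succ_apply' _ _ _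
    have e2 : (Polynomial.derivative^[s + 1 + 1]) p
        = Polynomial.derivative ((Polynomial.derivative^[s + 1]) p) :=
      Function.iterate_succ_apply' _ _ _
    have e3 : (Polynomial.derivative^[s + 1]) p
        = Polynomial.derivative ((Polynomial.derivative^[s]) p) :=
      Function.iterate_succ_apply' _ _ _
    have e4 : C ((((s : ℕ) + 1 : ℕ) : ℝ) + 1) = C ((s : ℝ) + 1) + 1 := by
      push_cast
      rw [show ((s : ℝ) + 1 + 1) = ((s : ℝ) + 1) + 1 from by ring, map_add, map_one]
    rw [e1, ih, derivative_add, derivative_mul, derivative_mul, e2, ← e3, e4]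
    simp only [derivative_add, derivative_X, derivative_C, add_zero, one_mul, zero_mul, zero_add]
    ring

/-- Key lemma (backward direction): if all `σ_i(l, x) > 0` for `1 ≤ i ≤ j + 1`,
then `σ_j(l) > 0`. -/
lemma key (m j : ℕ) (hj1 : 1 ≤ j) (hjm : j ≤ m) (l : Fin m → ℝ) (x : ℝ)
    (h : ∀ i, 1 ≤ i → i ≤ j + 1 → 0 < esymm (m + 1) i (Fin.snoc l x)) :
    0 < esymm m j l := by
  by_contra hneg
  push_neg at hneg
  obtain ⟨s, hs_def⟩ : ∃ s, s = m - j := ⟨m - j, rfl⟩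
  have hsm : s ≤ m := by omega
  have hms : m - s = j := by omega
  have hsj : s + j = m := by omega
  obtain ⟨P, hP⟩ : ∃ P : ℝ[X], P = ∏ i : Fin m, (X + C (l i)) := ⟨_, rfl⟩
  obtain ⟨F, hFdef⟩ : ∃ F : ℝ[X], F = ∏ i : Fin (m + 1), (X + C (Fin.snoc l x i)) := ⟨_, rfl⟩
  have hF : F = (X + C x) * P := by
    rw [hFdef, hP, Fin.prod_univ_castSucc]
    simp only [Fin.snoc_castSucc, Fin.snoc_last]
    rw [mul_comm]
  have hPdeg : P.natDegree = m := by rw [hP]; exact natDegree_prod' m l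
  have hPmonic : P.Monic := by rw [hP]; exact monic_prod' m l
  have hProots : Multiset.card P.roots = m := by rw [hP]; exact roots_card_prod m l
  have hFdeg : F.natDegree = m + 1 := by rw [hFdef]; exact natDegree_prod' (m + 1) _
  have hPcoeffm : P.coeff m = 1 := by
    have := hPmonic.coeff_natDegree
    rwa [hPdeg] at this
  have hPcoeffs : P.coeff s = esymm m j l := by
    rw [hs_def, hP]
    exact esymm_eq_coeff hjm l
  have hFcoeff : ∀ t, t + s ≤ m + 1 →
      F.coeff (t + s) = esymm (m + 1) (m + 1 - (t + s)) (Fin.snoc l x) := by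
    intro t hts
    have := esymm_eq_coeff (n := m + 1) (j := m + 1 - (t + s)) (by omega) (Fin.snoc l x)
    rw [Nat.sub_sub_self hts] at this
    rw [hFdef]
    exact this
  clear hP hFdef
  -- the iterated derivative q of P
  obtain ⟨q, hq⟩ : ∃ q : ℝ[X], q = (Polynomial.derivative^[s]) P := ⟨_, rfl⟩
  have hqdegle : q.natDegree ≤ j := by
    rw [hq]
    calc ((Polynomial.derivative^[s]) P).natDegree ≤ P.natDegree - s :=
        Polynomial.natDegree_iterate_derivative P s
    _ = j := by rw [hPdeg, hms]
  have hqcoeffj : q.coeff j = (m.descFactorial s : ℝ) := by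
    rw [hq, Polynomial.coeff_iterate_derivative]
    have hjs : j + s = m := by omega
    rw [hjs, hPcoeffm, nsmul_eq_mul, mul_one]
  have hdesc_pos : 0 < (m.descFactorial s : ℝ) := by
    have : m.descFactorial s ≠ 0 := by
      intro hz
      have := Nat.descFactorial_eq_zero_iff_lt.mp hz
      omega
    positivity
  have hqcoeffj_ne : q.coeff j ≠ 0 := by rw [hqcoeffj]; exact hdesc_pos.ne'
  have hqdeg : q.natDegree = j :=
    le_antisymm hqdegle (Polynomial.le_natDegree_of_ne_zero hqcoeffj_ne)
  have hqroots : Multiset.card q.roots = j := by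
    apply le_antisymm
    · calc Multiset.card q.roots ≤ q.natDegree := Polynomial.card_roots' q
      _ = j := hqdeg
    · calc j = Multiset.card P.roots - s := by rw [hProots, hms]
      _ ≤ Multiset.card q.roots := by rw [hq]; exact card_roots_iterate P s
  have hqlead : q.leadingCoeff = (m.descFactorial s : ℝ) := by
    rw [Polynomial.leadingCoeff, hqdeg, hqcoeffj]
  have hqfact : C q.leadingCoeff * (q.roots.map fun a => X - C a).prod = q :=
    Polynomial.C_leadingCoeff_mul_prod_multiset_X_sub_C (by rw [hqroots, hqdeg])
  -- q(0) ≤ 0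
  have hq0 : q.coeff 0 ≤ 0 := by
    rw [hq, Polynomial.coeff_iterate_derivative]
    have h1 : (0 : ℕ) + s = s := by omega
    rw [h1, hPcoeffs, nsmul_eq_mul]
    have : (0:ℝ) < (s.descFactorial s : ℝ) := by
      have : s.descFactorial s ≠ 0 := by
        intro hz; have := Nat.descFactorial_eq_zero_iff_lt.mp hz; omega
      positivity
    nlinarith
  have hqeval0 : q.eval 0 ≤ 0 := by
    rwa [Polynomial.coeff_zero_eq_eval_zero] at hq0
  -- q has a nonnegative root
  have hex : ∃ ρ ∈ q.roots, 0 ≤ ρ := by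
    by_contra hc
    push_neg at hc
    have hpos := (aux_prod_pos 0 q.roots hc).1
    have heval : q.eval 0 = q.leadingCoeff * ((q.roots.map fun a => X - C a).prod).eval 0 := by
      conv_lhs => rw [← hqfact]
      rw [eval_mul, eval_C]
    rw [heval, hqlead] at hqeval0
    nlinarith
  obtain ⟨ρ₀, hρ₀mem, hρ₀⟩ := hex
  have hne : q.roots.toFinset.Nonempty := ⟨ρ₀, Multiset.mem_toFinset.2 hρ₀mem⟩
  obtain ⟨r, hr⟩ : ∃ r : ℝ, r = q.roots.toFinset.max' hne := ⟨_, rfl⟩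
  have hr0 : 0 ≤ r := by
    rw [hr]
    exact le_trans hρ₀ (Finset.le_max' _ _ (Multiset.mem_toFinset.2 hρ₀mem))
  have hrmax : ∀ ρ ∈ q.roots, ρ ≤ r := by
    intro ρ hρ
    rw [hr]
    exact Finset.le_max' _ _ (Multiset.mem_toFinset.2 hρ)
  have hrroot : q.eval r = 0 := by
    have : r ∈ q.roots := by
      rw [hr]
      exact Multiset.mem_toFinset.1 (q.roots.toFinset.max'_mem hne)
    exact Polynomial.isRoot_of_mem_roots this
  clear hr
  -- q is positive to the right of r
  have hqpos : ∀ t, r < t → 0 < q.eval t := by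
    intro t ht
    have hpos := (aux_prod_pos t q.roots fun ρ hρ => lt_of_le_of_lt (hrmax ρ hρ) ht).1
    have heval : q.eval t = q.leadingCoeff * ((q.roots.map fun a => X - C a).prod).eval t := by
      conv_lhs => rw [← hqfact]
      rw [eval_mul, eval_C]
    rw [heval, hqlead]
    exact mul_pos hdesc_pos hpos
  -- g = s-th derivative of F, positive at r
  obtain ⟨g, hg⟩ : ∃ g : ℝ[X], g = (Polynomial.derivative^[s]) F := ⟨_, rfl⟩
  have hgcoeff : ∀ t, t ≤ j + 1 → 0 < g.coeff t := by
    intro t ht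
    rw [hg, Polynomial.coeff_iterate_derivative]
    have hts : t + s ≤ m + 1 := by omega
    have hdpos : (0:ℝ) < ((t + s).descFactorial s : ℝ) := by
      have : (t + s).descFactorial s ≠ 0 := by
        intro hz; have := Nat.descFactorial_eq_zero_iff_lt.mp hz; omega
      positivity
    rw [hFcoeff t hts, nsmul_eq_mul]
    rcases Nat.eq_zero_or_pos (m + 1 - (t + s)) with h0 | hpos
    · rw [h0, esymm_zero_eq_one]
      nlinarith
    · have := h (m + 1 - (t + s)) hpos (by omega)
      nlinarith
  have hgdegle : g.natDegree ≤ j + 1 := by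
    rw [hg]
    calc ((Polynomial.derivative^[s]) F).natDegree ≤ F.natDegree - s :=
        Polynomial.natDegree_iterate_derivative F s
    _ ≤ j + 1 := by rw [hFdeg]; omega
  have hgr : 0 < g.eval r := by
    rw [Polynomial.eval_eq_sum_range]
    apply Finset.sum_pos'
    · intro t htmem
      have ht : t ≤ j + 1 := le_trans (Nat.lt_succ_iff.mp (Finset.mem_range.mp htmem)) hgdegle
      exact mul_nonneg (hgcoeff t ht).le (pow_nonneg hr0 t)
    · refine ⟨0, Finset.mem_range.2 (Nat.succ_pos _), ?_⟩
      simpa using hgcoeff 0 (by omega)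
  -- case split on s
  rcases Nat.eq_zero_or_pos s with hs0 | hspos
  · -- s = 0 : g = F = (X + C x) * q, but q(r) = 0
    have hgF : g = (X + C x) * q := by
      rw [hg, hq, hs0, Function.iterate_zero_apply, Function.iterate_zero_apply, hF]
    rw [hgF, eval_mul, hrroot, mul_zero] at hgr
    exact lt_irrefl 0 hgr
  · obtain ⟨s', rfl⟩ : ∃ s', s = s' + 1 := ⟨s - 1, by omega⟩
    obtain ⟨Q, hQ⟩ : ∃ Q : ℝ[X], Q = (Polynomial.derivative^[s']) P := ⟨_, rfl⟩
    have hQq : Polynomial.derivative Q = q := by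
      rw [hQ, hq, ← Function.iterate_succ_apply' Polynomial.derivative s' P]
    -- Leibniz
    have hgleib : g = (X + C x) * q + C ((s' : ℝ) + 1) * Q := by
      rw [hg, hF, leib x P s', ← hq, ← hQ]
    -- Q(r) > 0
    have hQr : 0 < Q.eval r := by
      rw [hgleib] at hgr
      simp only [eval_add, eval_mul, eval_C, hrroot, mul_zero, zero_add] at hgr
      have hcast : (0:ℝ) < (s' : ℝ) + 1 := by positivity
      rcases mul_pos_iff.mp hgr with ⟨_, hpos⟩ | ⟨hneg', _⟩
      · exact hpos
      · linarith
    -- Q positive on [r, ∞)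
    have hQmono : StrictMonoOn (fun y => Q.eval y) (Set.Ici r) := by
      apply strictMonoOn_of_deriv_pos (convex_Ici r) (Polynomial.continuous Q).continuousOn
      intro y hy
      rw [interior_Ici] at hy
      have hd : deriv (fun y => Q.eval y) y = q.eval y := by
        rw [Polynomial.deriv, hQq]
      rw [hd]
      exact hqpos y hy
    have hQpos : ∀ t, r ≤ t → 0 < Q.eval t := by
      intro t ht
      rcases eq_or_lt_of_le ht with rfl | hlt
      · exact hQr
      · have := hQmono (Set.self_mem_Ici) (Set.mem_Ici.2 ht) hlt
        simp only at this
        linarith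
    have hQrootslt : ∀ ρ ∈ Q.roots, ρ < r := by
      intro ρ hρ
      by_contra hge
      push_neg at hge
      have h0 : Q.eval ρ = 0 := Polynomial.isRoot_of_mem_roots hρ
      have := hQpos ρ hge
      linarith
    -- Q is real rooted with positive leading coefficient
    have hQdegle : Q.natDegree ≤ j + 1 := by
      rw [hQ]
      calc ((Polynomial.derivative^[s']) P).natDegree ≤ P.natDegree - s' :=
          Polynomial.natDegree_iterate_derivative P s'
      _ ≤ j + 1 := by rw [hPdeg]; omega
    have hQcoeff : Q.coeff (j + 1) = (m.descFactorial s' : ℝ) := by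
      rw [hQ, Polynomial.coeff_iterate_derivative]
      have hjs : j + 1 + s' = m := by omega
      rw [hjs, hPcoeffm, nsmul_eq_mul, mul_one]
    have hQdesc_pos : 0 < (m.descFactorial s' : ℝ) := by
      have : m.descFactorial s' ≠ 0 := by
        intro hz; have := Nat.descFactorial_eq_zero_iff_lt.mp hz; omega
      positivity
    have hQdeg : Q.natDegree = j + 1 :=
      le_antisymm hQdegle
        (Polynomial.le_natDegree_of_ne_zero (by rw [hQcoeff]; exact hQdesc_pos.ne'))
    have hQroots : Multiset.card Q.roots = j + 1 := by
      apply le_antisymm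
      · calc Multiset.card Q.roots ≤ Q.natDegree := Polynomial.card_roots' Q
        _ = j + 1 := hQdeg
      · calc j + 1 = Multiset.card P.roots - s' := by rw [hProots]; omega
        _ ≤ Multiset.card Q.roots := by rw [hQ]; exact card_roots_iterate P s'
    have hQlead : Q.leadingCoeff = (m.descFactorial s' : ℝ) := by
      rw [Polynomial.leadingCoeff, hQdeg, hQcoeff]
    have hQfact : C Q.leadingCoeff * (Q.roots.map fun a => X - C a).prod = Q :=
      Polynomial.C_leadingCoeff_mul_prod_multiset_X_sub_C (by rw [hQroots, hQdeg])
    have hQroots_ne : Q.roots ≠ 0 := by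
      intro h0
      rw [h0] at hQroots
      simp at hQroots
    -- derivative of Q at r is positive, contradiction with q(r) = 0
    have hderiv_pos : 0 < (Polynomial.derivative Q).eval r := by
      have hd : Polynomial.derivative Q =
          C Q.leadingCoeff * Polynomial.derivative (Q.roots.map fun a => X - C a).prod := by
        conv_lhs => rw [← hQfact]
        rw [Polynomial.derivative_C_mul]
      rw [hd, eval_mul, eval_C, hQlead]
      exact mul_pos hQdesc_pos ((aux_prod_pos r Q.roots hQrootslt).2 hQroots_ne)
    rw [hQq, hrroot] at hderiv_pos
    exact lt_irrefl 0 hderiv_pos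

/-- Recursion: `σ_j(l, x) = σ_j(l) + x σ_{j-1}(l)`. -/
lemma esymm_snoc (m : ℕ) (l : Fin m → ℝ) (x : ℝ) (j : ℕ) (hj1 : 1 ≤ j) (hj : j ≤ m + 1) :
    esymm (m + 1) j (Fin.snoc l x) = esymm m j l + x * esymm m (j - 1) l := by
  have hF : (∏ i : Fin (m + 1), (X + C (Fin.snoc l x i)))
      = X * (∏ i : Fin m, (X + C (l i))) + C x * (∏ i : Fin m, (X + C (l i))) := by
    rw [Fin.prod_univ_castSucc]
    simp only [Fin.snoc_castSucc, Fin.snoc_last]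
    ring
  have hL : esymm (m + 1) j (Fin.snoc l x)
      = (∏ i : Fin (m + 1), (X + C (Fin.snoc l x i))).coeff (m + 1 - j) :=
    (esymm_eq_coeff hj _).symm
  rw [hL, hF, Polynomial.coeff_add, Polynomial.coeff_C_mul]
  rcases eq_or_lt_of_le hj with rfl | hjm
  · -- j = m + 1
    have h0 : m + 1 - (m + 1) = 0 := by omega
    rw [h0]
    rw [Polynomial.mul_coeff_zero, Polynomial.coeff_X_zero, zero_mul, zero_add]
    have h1 : (∏ i : Fin m, (X + C (l i))).coeff 0 = esymm m m l := by
      have := esymm_eq_coeff (le_refl m) l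
      rwa [Nat.sub_self] at this
    have h2 : m + 1 - 1 = m := by omega
    rw [h1, esymm_of_gt (n := m) (j := m + 1) (by omega) l, zero_add, h2]
  · -- j ≤ m
    have hjm' : j ≤ m := by omega
    have h1 : m + 1 - j = (m - j) + 1 := by omega
    rw [h1, Polynomial.coeff_X_mul]
    have h2 : (∏ i : Fin m, (X + C (l i))).coeff (m - j) = esymm m j l :=
      esymm_eq_coeff hjm' l
    have h3 : (∏ i : Fin m, (X + C (l i))).coeff (m - j + 1) = esymm m (j - 1) l := by
      have := esymm_eq_coeff (n := m) (j := j - 1) (by omega) l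
      have he : m - (j - 1) = m - j + 1 := by omega
      rwa [he] at this
    rw [h2, h3]

/-- For `n = m + 1 ≥ 2` and `2 ≤ k ≤ n`, a vector
`λ' ∈ ℝ^{n-1}` lies in the Gårding cone `Γ'_{k-1}` iff it is the projection of a
point of the Gårding cone `Γ_k ⊂ ℝⁿ` (forgetting the last coordinate). -/
theorem stmt_8 (m : ℕ) (hm : 1 ≤ m) (k : ℕ) (hk : 2 ≤ k) (hkn : k ≤ m + 1)
    (l : Fin m → ℝ) :
    (∀ j, 1 ≤ j → j ≤ k - 1 → 0 < esymm m j l) ↔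
      ∃ x : ℝ, ∀ j, 1 ≤ j → j ≤ k → 0 < esymm (m + 1) j (Fin.snoc l x) := by
  constructor
  · intro H
    have ha : ∀ i, i ≤ k - 1 → 0 < esymm m i l := by
      intro i hi
      rcases Nat.eq_zero_or_pos i with rfl | hpos
      · rw [esymm_zero_eq_one]; norm_num
      · exact H i hpos hi
    refine ⟨1 + ∑ j ∈ Finset.Icc 1 k, |esymm m j l| / esymm m (j - 1) l, ?_⟩
    intro j hj1 hjk
    rw [esymm_snoc m l _ j hj1 (le_trans hjk hkn)]
    have hprev : 0 < esymm m (j - 1) l := ha (j - 1) (by omega)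
    have hterm : |esymm m j l| / esymm m (j - 1) l
        < 1 + ∑ i ∈ Finset.Icc 1 k, |esymm m i l| / esymm m (i - 1) l := by
      have hle : |esymm m j l| / esymm m (j - 1) l
          ≤ ∑ i ∈ Finset.Icc 1 k, |esymm m i l| / esymm m (i - 1) l := by
        apply Finset.single_le_sum (f := fun i => |esymm m i l| / esymm m (i - 1) l)
        · intro i hi
          have : 0 < esymm m (i - 1) l := by
            apply ha
            have := Finset.mem_Icc.1 hi
            omega
          positivity
        · exact Finset.mem_Icc.2 ⟨hj1, hjk⟩
      linarith
    have habs : -esymm m j l ≤ |esymm m j l| := neg_le_abs _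
    have hmul : |esymm m j l|
        < (1 + ∑ i ∈ Finset.Icc 1 k, |esymm m i l| / esymm m (i - 1) l) * esymm m (j - 1) l := by
      have := (div_lt_iff₀ hprev).1 hterm
      linarith
    nlinarith
  · rintro ⟨x, hx⟩ j hj1 hjk
    exact key m j hj1 (by omega) l x fun i hi1 hi2 => hx i hi1 (by omega)
end

section
/- Let n ≥ 1 and 1 ≤ k ≤ n, and let κ = (κ₁,…,κₙ) ∈ ℝⁿ with κ_i > 0 for all i and κ₁ ≥ κ_i for all i. Then κ₁·σ_{k−1}(κ₂,…,κₙ) ≥ (k/n)·σ_k(κ₁,…,κₙ). -/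
open Finset

/-- Double counting: summing `g t j` over pairs `(t, j)` with `t` a `(k+1)`-subset of `s`
and `j ∈ t` equals summing over pairs `(u, j)` with `u` a `k`-subset and `j ∈ s \ u`. -/
lemma swap_sum {α : Type*} [DecidableEq α] (s : Finset α) (k : ℕ) (g : Finset α → α → ℝ) :
    ∑ t ∈ s.powersetCard (k + 1), ∑ j ∈ t, g t j
      = ∑ u ∈ s.powersetCard k, ∑ j ∈ s \ u, g (insert j u) j := by
  rw [Finset.sum_sigma', Finset.sum_sigma']
  refine Finset.sum_nbij' (fun p => ⟨p.1.erase p.2, p.2⟩) (fun p => ⟨insert p.2 p.1, p.2⟩)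
    ?_ ?_ ?_ ?_ ?_
  · rintro ⟨t, j⟩ hp
    simp only [mem_sigma, mem_powersetCard] at hp ⊢
    obtain ⟨⟨hts, htc⟩, hjt⟩ := hp
    refine ⟨⟨(erase_subset _ _).trans hts, ?_⟩, ?_⟩
    · rw [card_erase_of_mem hjt, htc]; rfl
    · simp [mem_sdiff, hts hjt]
  · rintro ⟨u, j⟩ hp
    simp only [mem_sigma, mem_powersetCard, mem_sdiff] at hp ⊢
    obtain ⟨⟨hus, huc⟩, hjs, hju⟩ := hp
    exact ⟨⟨insert_subset hjs hus, by rw [card_insert_of_notMem hju, huc]⟩, mem_insert_self _ _⟩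
  · rintro ⟨t, j⟩ hp
    simp only [mem_sigma, mem_powersetCard] at hp
    simp [insert_erase hp.2]
  · rintro ⟨u, j⟩ hp
    simp only [mem_sigma, mem_powersetCard, mem_sdiff] at hp
    simp [erase_insert hp.2.2]
  · rintro ⟨t, j⟩ hp
    simp only [mem_sigma, mem_powersetCard] at hp
    simp [insert_erase hp.2]

/-- The `k`-th elementary symmetric polynomial of `f` over the index set `s`. -/
noncomputable def esymmOn (n : ℕ) (s : Finset (Fin n)) (k : ℕ) (f : Fin n → ℝ) : ℝ :=
  ∑ t ∈ Finset.powersetCard k s, ∏ i ∈ t, f i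

/-- If `κ₁ ≥ κ_i > 0` for all `i`, then
`κ₁ σ_{k-1}(κ₂, …, κ_n) ≥ (k/n) σ_k(κ₁, …, κ_n)`. -/
theorem stmt_10 (n : ℕ) (hn : 1 ≤ n) (k : ℕ) (hk1 : 1 ≤ k) (hkn : k ≤ n)
    (κ : Fin n → ℝ) (hpos : ∀ i, 0 < κ i)
    (i₀ : Fin n) (hi₀ : (i₀ : ℕ) = 0)
    (hmax : ∀ i, κ i ≤ κ i₀) :
    (k : ℝ) / n * esymmOn n Finset.univ k κ
      ≤ κ i₀ * esymmOn n (Finset.univ.erase i₀) (k - 1) κ := by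
  have hnpos : (0 : ℝ) < n := by exact_mod_cast hn
  set E := esymmOn n (Finset.univ.erase i₀) (k - 1) κ with hE
  set F := esymmOn n (Finset.univ.erase i₀) k κ with hF
  -- obtain k from k-1
  obtain ⟨m, rfl⟩ : ∃ m, k = m + 1 := ⟨k - 1, (Nat.succ_pred_eq_of_pos hk1).symm⟩
  have hkm : (m + 1) - 1 = m := rfl
  -- Step 1: σ_k(univ) = κ i₀ * E + F
  have hsplit : esymmOn n Finset.univ (m + 1) κ = κ i₀ * E + F := by
    have huniv : (Finset.univ : Finset (Fin n)) = insert i₀ (Finset.univ.erase i₀) := by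
      simp
    rw [esymmOn, huniv, powersetCard_succ_insert (notMem_erase _ _),
      Finset.sum_union, Finset.sum_image]
    · rw [add_comm, hE, hkm, esymmOn, Finset.mul_sum]
      congr 1
      refine Finset.sum_congr rfl fun t ht => ?_
      rw [mem_powersetCard] at ht
      rw [Finset.prod_insert (fun h => (notMem_erase i₀ _) (ht.1 h))]
    · intro t ht u hu h
      rw [Finset.mem_coe, mem_powersetCard] at ht hu
      have : ∀ v : Finset (Fin n), v ⊆ Finset.univ.erase i₀ → (insert i₀ v).erase i₀ = v := by
        intro v hv
        rw [erase_insert (fun h => (notMem_erase i₀ _) (hv h))]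
      rw [← this t ht.1, ← this u hu.1, h]
    · rw [Finset.disjoint_left]
      intro t ht ht'
      rw [mem_powersetCard] at ht
      obtain ⟨u, hu, rfl⟩ := Finset.mem_image.mp ht'
      exact (notMem_erase i₀ _) (ht.1 (mem_insert_self _ _))
  -- Step 2: (m+1) * F ≤ (n - (m+1)) * (κ i₀ * E)
  have hstep2 : ((m : ℝ) + 1) * F ≤ ((n : ℝ) - (m + 1)) * (κ i₀ * E) := by
    have hcard : ∀ t ∈ (Finset.univ.erase i₀).powersetCard (m + 1), (t.card : ℝ) = m + 1 := by
      intro t ht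
      rw [mem_powersetCard] at ht
      exact_mod_cast congrArg Nat.cast ht.2
    have h1 : ((m : ℝ) + 1) * F = ∑ t ∈ (Finset.univ.erase i₀).powersetCard (m + 1),
        ∑ j ∈ t, ∏ i ∈ t, κ i := by
      rw [hF, esymmOn, Finset.mul_sum]
      refine Finset.sum_congr rfl fun t ht => ?_
      rw [Finset.sum_const, nsmul_eq_mul, hcard t ht]
    have h2 : ∀ t ∈ (Finset.univ.erase i₀).powersetCard (m + 1), ∀ j ∈ t,
        ∏ i ∈ t, κ i ≤ κ i₀ * ∏ i ∈ t.erase j, κ i := by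
      intro t ht j hj
      rw [← Finset.prod_erase_mul t κ hj, mul_comm]
      exact mul_le_mul_of_nonneg_right (hmax j)
        (Finset.prod_nonneg fun i _ => (hpos i).le)
    have h3 : ((m : ℝ) + 1) * F ≤ ∑ t ∈ (Finset.univ.erase i₀).powersetCard (m + 1),
        ∑ j ∈ t, κ i₀ * ∏ i ∈ t.erase j, κ i := by
      rw [h1]
      exact Finset.sum_le_sum fun t ht => Finset.sum_le_sum fun j hj => h2 t ht j hj
    refine h3.trans_eq ?_
    rw [swap_sum (Finset.univ.erase i₀) m (fun t j => κ i₀ * ∏ i ∈ t.erase j, κ i)]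
    have hcard2 : ∀ u ∈ (Finset.univ.erase i₀).powersetCard m,
        ((Finset.univ.erase i₀ \ u).card : ℝ) = (n : ℝ) - (m + 1) := by
      intro u hu
      rw [mem_powersetCard] at hu
      rw [Finset.card_sdiff_of_subset hu.1, Finset.card_erase_of_mem (mem_univ i₀), Finset.card_univ,
        Fintype.card_fin, hu.2]
      have hmn : m + 1 ≤ n := hkn
      have : n - 1 - m = n - (m + 1) := by omega
      rw [this, Nat.cast_sub hmn]
      push_cast
      ring
    rw [hE, hkm, esymmOn, Finset.mul_sum, Finset.mul_sum]
    refine Finset.sum_congr rfl fun u hu => ?_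
    have hprod : ∀ j ∈ Finset.univ.erase i₀ \ u,
        κ i₀ * ∏ i ∈ (insert j u).erase j, κ i = κ i₀ * ∏ i ∈ u, κ i := by
      intro j hj
      rw [Finset.erase_insert (Finset.mem_sdiff.mp hj).2]
    rw [Finset.sum_congr rfl hprod, Finset.sum_const, nsmul_eq_mul, hcard2 u hu]
  -- Combine
  rw [hsplit, div_mul_eq_mul_div, div_le_iff₀ hnpos]
  have hE0 : 0 ≤ E := by
    rw [hE]
    exact Finset.sum_nonneg fun t _ => Finset.prod_nonneg fun i _ => (hpos i).le
  have hκ0 : 0 ≤ κ i₀ := (hpos i₀).le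
  push_cast
  nlinarith [mul_nonneg hκ0 hE0]
end

section
/- Let I ⊆ ℝ be an interval and η : I → ℝ differentiable with η(t) > 0 and η'(t) > 0 for all t ∈ I, and suppose the function t ↦ η(t)/η'(t) is nonincreasing on I. Let a, b ∈ I with a ≤ b, and let M be a symmetric n×n real matrix such that η(b)·I + η'(b)·M is positive definite. Then η(a)·I + η'(a)·M is positive definite. -/
open Matrix

/-- If `η, η' > 0` on an interval `I`, `η/η'` is nonincreasing on `I`,
`a ≤ b` in `I`, `M` is symmetric and `η(b) I + η'(b) M` is positive definite, then
`η(a) I + η'(a) M` is positive definite. -/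
theorem stmt_11 (n : ℕ) (I : Set ℝ) (hI : I.OrdConnected)
    (η η' : ℝ → ℝ)
    (hdiff : ∀ t ∈ I, HasDerivAt η (η' t) t)
    (hηpos : ∀ t ∈ I, 0 < η t) (hη'pos : ∀ t ∈ I, 0 < η' t)
    (hmono : AntitoneOn (fun t => η t / η' t) I)
    (a b : ℝ) (ha : a ∈ I) (hb : b ∈ I) (hab : a ≤ b)
    (M : Matrix (Fin n) (Fin n) ℝ) (hM : M.IsSymm)
    (hpos : (η b • (1 : Matrix (Fin n) (Fin n) ℝ) + η' b • M).PosDef) :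
    (η a • (1 : Matrix (Fin n) (Fin n) ℝ) + η' a • M).PosDef := by
  obtain ⟨hHerm, hq⟩ := Matrix.posDef_iff_dotProduct_mulVec.mp hpos
  have hratio : η b / η' b ≤ η a / η' a := hmono ha hb hab
  have hηa := hηpos a ha
  have hη'a := hη'pos a ha
  have hηb := hηpos b hb
  have hη'b := hη'pos b hb
  have hcross : η b * η' a ≤ η a * η' b := by
    rw [div_le_div_iff₀ hη'b hη'a] at hratio
    linarith
  have hMH : M.IsHermitian := by
    exact Matrix.isHermitian_iff_isSymm.mpr hM
  rw [Matrix.posDef_iff_dotProduct_mulVec]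
  constructor
  · simp [Matrix.IsHermitian, Matrix.conjTranspose_add, Matrix.conjTranspose_smul, hMH.eq, hM.eq]
  · intro x hx
    have hqb := @hq x hx
    have hs : 0 < x ⬝ᵥ x := by
      have : x ⬝ᵥ x ≠ 0 := fun h => hx (dotProduct_self_eq_zero.mp h)
      have hnn : 0 ≤ x ⬝ᵥ x := by
        rw [dotProduct]
        exact Finset.sum_nonneg fun i _ => mul_self_nonneg (x i)
      exact lt_of_le_of_ne hnn (Ne.symm this)
    simp only [Matrix.add_mulVec, Matrix.smul_mulVec, Matrix.one_mulVec,
      dotProduct_add, dotProduct_smul, smul_eq_mul, star_trivial,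
      RCLike.re_to_real] at hqb ⊢
    set s := x ⬝ᵥ x
    set t := x ⬝ᵥ M.mulVec x
    nlinarith [mul_pos hη'a hqb, mul_nonneg (mul_nonneg hη'b.le hηa.le) hs.le,
      mul_le_mul_of_nonneg_right hcross hs.le]
end
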